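/- (Theorem 2, time-varying mode scheduling.) Suppose ℓ ≥ 0 and V_f ≥ 0 everywhere, the terminal conditions hold (𝕏_f ⊆ 𝕏, and for every y ∈ 𝕏_f there exists w ∈ 𝕌 with f(y,w) ∈ 𝕏_f and V_f(f(y,w)) ≤ V_f(y) − ℓ(y,w)), and there is a K-function α₁ with ℓ(y,w) ≥ α₁(‖y‖) for all y ∈ 𝕏, w ∈ 𝕌. Let a : ℕ → ℝ with a(k) ≥ 0, M : ℕ → ℕ with 1 ≤ M(k) ≤ N, and let x : ℕ → ℝⁿ be a closed-loop trajectory: for each k there is an optimal pair (v*_k, z*_k) for P_N(x(k)) and an input sequence u_k that is (a(k), M(k))-admissible at x(k) relative to (v*_k, z*_k), with x(k+1) = f(x(k), u_k(0)). Then: (i) x(k) ∈ 𝕏 and u_k(0) ∈ 𝕌 for all k ∈ ℕ; and (ii) if there exist K_s ∈ ℕ and ā ∈ (0,1] such that a(k) ≤ 1 − ā for all k ≥ K_s, then V_N*(x(k+1)) ≤ V_N*(x(k)) − ā·α₁(‖x(k)‖) for all k ≥ K_s and x(k) → 0 as k → ∞. -/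

import Mathlib

section Framework

variable {S I : Type*}

/-- The trajectory generated by dynamics `f` from initial state `x` under input sequence `v`. -/
def traj (f : S → I → S) (x : S) (v : ℕ → I) : ℕ → S
  | 0 => x
  | k + 1 => f (traj f x v k) (v k)

/-- `v` is an `N`-feasible input sequence from `x`. -/
def Feasible (f : S → I → S) (X : Set S) (U : Set I) (Xf : Set S)
    (N : ℕ) (x : S) (v : ℕ → I) : Prop :=
  (∀ i < N, traj f x v i ∈ X ∧ v i ∈ U) ∧ traj f x v N ∈ Xf

/-- The MPC cost `V_N(x, v)`. -/
noncomputable def mpcCost (f : S → I → S) (l : S → I → ℝ) (Vf : S → ℝ)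
    (N : ℕ) (x : S) (v : ℕ → I) : ℝ :=
  (∑ i ∈ Finset.range N, l (traj f x v i) (v i)) + Vf (traj f x v N)

/-- `(v, z)` is an optimal pair for the problem `P_N(x)`. -/
def OptPair (f : S → I → S) (X : Set S) (U : Set I) (Xf : Set S)
    (l : S → I → ℝ) (Vf : S → ℝ) (N : ℕ) (x : S) (v : ℕ → I) (z : ℕ → S) : Prop :=
  Feasible f X U Xf N x v ∧ (∀ i, z i = traj f x v i) ∧
    ∀ w, Feasible f X U Xf N x w → mpcCost f l Vf N x v ≤ mpcCost f l Vf N x w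

/-- `u` is an `(a, M)`-admissible input sequence at `x`, relative to the optimal pair `(v, z)`. -/
def Adm (f : S → I → S) (X : Set S) (U : Set I) (l : S → I → ℝ)
    (a : ℝ) (M : ℕ) (x : S) (v : ℕ → I) (z : ℕ → S) (u : ℕ → I) : Prop :=
  (∀ i < M, traj f x u i ∈ X ∧ u i ∈ U) ∧
  ((∑ i ∈ Finset.range M, l (traj f x u i) (u i))
      - ∑ i ∈ Finset.range M, l (z i) (v i)) ≤ a * l x (u 0) ∧
  traj f x u M = z M

/-- The safety–stability set `𝕊(x)`. -/
def S2Set (f : S → I → S) (X : Set S) (U : Set I) (l : S → I → ℝ)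
    (a : ℝ) (M : ℕ) (x : S) (v : ℕ → I) (z : ℕ → S) : Set I :=
  {w | ∃ u, Adm f X U l a M x v z u ∧ u 0 = w}

/-- The value function `V_N^*`. -/
noncomputable def VStar (f : S → I → S) (X : Set S) (U : Set I) (Xf : Set S)
    (l : S → I → ℝ) (Vf : S → ℝ) (N : ℕ) (y : S) : ℝ :=
  sInf (mpcCost f l Vf N y '' {v | Feasible f X U Xf N y v})

/-- A K-function: continuous, strictly increasing on `[0, ∞)`, vanishing at `0`. -/
def IsKFun (α : ℝ → ℝ) : Prop :=
  Continuous α ∧ StrictMonoOn α (Set.Ici 0) ∧ α 0 = 0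

end Framework

section Aux

variable {S I : Type*}

lemma mpcCost_nonneg (f : S → I → S) (l : S → I → ℝ) (Vf : S → ℝ)
    (hl : ∀ y w, 0 ≤ l y w) (hVf : ∀ y, 0 ≤ Vf y) (N : ℕ) (x : S) (v : ℕ → I) :
    0 ≤ mpcCost f l Vf N x v :=
  add_nonneg (Finset.sum_nonneg fun _ _ => hl _ _) (hVf _)

lemma VStar_bddBelow (f : S → I → S) (X : Set S) (U : Set I) (Xf : Set S)
    (l : S → I → ℝ) (Vf : S → ℝ)
    (hl : ∀ y w, 0 ≤ l y w) (hVf : ∀ y, 0 ≤ Vf y) (N : ℕ) (y : S) :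
    BddBelow (mpcCost f l Vf N y '' {v | Feasible f X U Xf N y v}) := by
  refine ⟨0, ?_⟩
  rintro b ⟨v, -, rfl⟩
  exact mpcCost_nonneg f l Vf hl hVf N y v

lemma VStar_nonneg (f : S → I → S) (X : Set S) (U : Set I) (Xf : Set S)
    (l : S → I → ℝ) (Vf : S → ℝ)
    (hl : ∀ y w, 0 ≤ l y w) (hVf : ∀ y, 0 ≤ Vf y) (N : ℕ) (y : S) :
    0 ≤ VStar f X U Xf l Vf N y := by
  apply Real.sInf_nonneg
  rintro b ⟨v, -, rfl⟩
  exact mpcCost_nonneg f l Vf hl hVf N y v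

lemma VStar_le_of_feasible (f : S → I → S) (X : Set S) (U : Set I) (Xf : Set S)
    (l : S → I → ℝ) (Vf : S → ℝ)
    (hl : ∀ y w, 0 ≤ l y w) (hVf : ∀ y, 0 ≤ Vf y) (N : ℕ) (y : S) (v : ℕ → I)
    (hfeas : Feasible f X U Xf N y v) :
    VStar f X U Xf l Vf N y ≤ mpcCost f l Vf N y v :=
  csInf_le (VStar_bddBelow f X U Xf l Vf hl hVf N y) ⟨v, hfeas, rfl⟩

lemma VStar_eq_of_opt (f : S → I → S) (X : Set S) (U : Set I) (Xf : Set S)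
    (l : S → I → ℝ) (Vf : S → ℝ)
    (hl : ∀ y w, 0 ≤ l y w) (hVf : ∀ y, 0 ≤ Vf y) (N : ℕ) (y : S)
    (v : ℕ → I) (z : ℕ → S) (hopt : OptPair f X U Xf l Vf N y v z) :
    VStar f X U Xf l Vf N y = mpcCost f l Vf N y v := by
  refine le_antisymm (VStar_le_of_feasible f X U Xf l Vf hl hVf N y v hopt.1) ?_
  refine le_csInf ⟨mpcCost f l Vf N y v, v, hopt.1, rfl⟩ ?_
  rintro b ⟨w, hw, rfl⟩
  exact hopt.2.2 w hw

end Aux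

section Step

variable {S I : Type*}

lemma step_lemma (f : S → I → S) (X : Set S) (U : Set I) (Xf : Set S)
    (l : S → I → ℝ) (Vf : S → ℝ) (N : ℕ)
    (hl : ∀ y w, 0 ≤ l y w) (hVf : ∀ y, 0 ≤ Vf y) (hXfX : Xf ⊆ X)
    (hterm : ∀ y ∈ Xf, ∃ w ∈ U, f y w ∈ Xf ∧ Vf (f y w) ≤ Vf y - l y w)
    (a : ℝ) (M₀ : ℕ) (hM1 : 1 ≤ M₀) (hMN : M₀ ≤ N)
    (x₀ : S) (v : ℕ → I) (z : ℕ → S) (uu : ℕ → I)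
    (hopt : OptPair f X U Xf l Vf N x₀ v z)
    (hadm : Adm f X U l a M₀ x₀ v z uu) :
    VStar f X U Xf l Vf N (f x₀ (uu 0)) ≤ VStar f X U Xf l Vf N x₀ - (1 - a) * l x₀ (uu 0) := by
  have hfeas := hopt.1
  have hz := hopt.2.1
  obtain ⟨hXU, hcost, hend⟩ := hadm
  have hzXf : z N ∈ Xf := by rw [hz]; exact hfeas.2
  obtain ⟨w, hwU, hwXf, hwV⟩ := hterm (z N) hzXf
  set x₁ := f x₀ (uu 0) with hx₁
  set v' : ℕ → I := fun i => if i + 1 < M₀ then uu (i+1) else if i + 1 < N then v (i+1) else w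
    with hv'
  have hv'def : ∀ i, v' i = if i + 1 < M₀ then uu (i+1) else if i + 1 < N then v (i+1) else w :=
    fun i => rfl
  -- trajectory claim
  have hT : ∀ i, i ≤ N → traj f x₁ v' i =
      if i < M₀ then traj f x₀ uu (i+1) else if i < N then z (i+1) else f (z N) w := by
    intro i
    induction i with
    | zero =>
      intro _
      rw [if_pos (by omega : 0 < M₀)]
      rfl
    | succ i ih =>
      intro hiN
      have hTi := ih (Nat.le_of_succ_le hiN)
      have hstep : traj f x₁ v' (i+1) = f (traj f x₁ v' i) (v' i) := rfl
      by_cases h1 : i + 1 < M₀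
      · have h0 : i < M₀ := Nat.lt_of_succ_lt h1
        rw [if_pos h1, hstep, hTi, if_pos h0, hv'def i, if_pos h1]
        rfl
      · by_cases h2 : i + 1 < N
        · have hv : v' i = v (i+1) := by rw [hv'def i, if_neg h1, if_pos h2]
          rw [if_neg h1, if_pos h2, hstep, hv, hTi]
          by_cases h0 : i < M₀
          · have hM : i + 1 = M₀ := by omega
            rw [if_pos h0, hM, hend, ← hM, hz (i+1), hz (i+1+1)]
            rfl
          · rw [if_neg h0, if_pos (by omega : i < N), hz (i+1), hz (i+1+1)]
            rfl
        · have hiN' : i + 1 = N := by omega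
          have hv : v' i = w := by rw [hv'def i, if_neg h1, if_neg h2]
          rw [if_neg h1, if_neg h2, hstep, hv, hTi]
          by_cases h0 : i < M₀
          · have hMeq : M₀ = N := by omega
            rw [if_pos h0, hiN', ← hMeq, hend, hMeq]
          · rw [if_neg h0, if_pos (by omega : i < N), hiN']
  -- feasibility of the candidate
  have hfeas' : Feasible f X U Xf N x₁ v' := by
    constructor
    · intro i hiN
      have hTi := hT i (le_of_lt hiN)
      constructor
      · rw [hTi]
        by_cases h0 : i < M₀
        · rw [if_pos h0]
          by_cases h1 : i + 1 < M₀
          · exact (hXU (i+1) h1).1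
          · have hM : i + 1 = M₀ := by omega
            rw [hM, hend]
            by_cases hMN' : M₀ < N
            · rw [hz]; exact (hfeas.1 M₀ hMN').1
            · have hMeq : M₀ = N := by omega
              rw [hMeq]; exact hXfX hzXf
        · rw [if_neg h0, if_pos hiN]
          by_cases h2 : i + 1 < N
          · rw [hz]; exact (hfeas.1 (i+1) h2).1
          · have hiN' : i + 1 = N := by omega
            rw [hiN']; exact hXfX hzXf
      · rw [hv'def i]
        by_cases h1 : i + 1 < M₀
        · rw [if_pos h1]; exact (hXU (i+1) h1).2
        · by_cases h2 : i + 1 < N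
          · rw [if_neg h1, if_pos h2]; exact (hfeas.1 (i+1) h2).2
          · rw [if_neg h1, if_neg h2]; exact hwU
    · rw [hT N le_rfl, if_neg (by omega : ¬ N < M₀), if_neg (lt_irrefl N)]
      exact hwXf
  -- cost of the candidate
  set c : ℕ → ℝ := fun j => if j < M₀ then l (traj f x₀ uu j) (uu j)
      else if j < N then l (z j) (v j) else l (z N) w with hc
  have hcdef : ∀ j, c j = if j < M₀ then l (traj f x₀ uu j) (uu j)
      else if j < N then l (z j) (v j) else l (z N) w := fun j => rfl
  have hc0 : c 0 = l x₀ (uu 0) := by rw [hcdef 0, if_pos (by omega : 0 < M₀)]; rfl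
  have hcN : c N = l (z N) w := by
    rw [hcdef N, if_neg (by omega : ¬ N < M₀), if_neg (lt_irrefl N)]
  have hterm_eq : ∀ i < N, l (traj f x₁ v' i) (v' i) = c (i+1) := by
    intro i hiN
    have hTi := hT i (le_of_lt hiN)
    rw [hTi, hv'def i, hcdef (i+1)]
    by_cases h1 : i + 1 < M₀
    · rw [if_pos (Nat.lt_of_succ_lt h1), if_pos h1, if_pos h1]
    · by_cases h2 : i + 1 < N
      · rw [if_neg h1, if_pos h2, if_neg h1, if_pos h2]
        by_cases h0 : i < M₀
        · have hM : i + 1 = M₀ := by omega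
          rw [if_pos h0, hM, hend]
        · rw [if_neg h0, if_pos (by omega : i < N)]
      · rw [if_neg h1, if_neg h2, if_neg h1, if_neg h2]
        by_cases h0 : i < M₀
        · have hMeq : M₀ = N := by omega
          have hiN' : i + 1 = N := by omega
          rw [if_pos h0, hiN', ← hMeq, hend, hMeq]
        · rw [if_neg h0, if_pos hiN, show i + 1 = N by omega]
  have hsum1 : ∑ i ∈ Finset.range N, l (traj f x₁ v' i) (v' i)
      = ∑ i ∈ Finset.range N, c (i+1) :=
    Finset.sum_congr rfl fun i hi => hterm_eq i (Finset.mem_range.mp hi)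
  have hsum2 : ∑ i ∈ Finset.range (N+1), c i = (∑ i ∈ Finset.range N, c (i+1)) + c 0 :=
    Finset.sum_range_succ' c N
  have hsum3 : ∑ i ∈ Finset.range (N+1), c i = (∑ i ∈ Finset.range N, c i) + c N :=
    Finset.sum_range_succ c N
  have hsplit : ∑ i ∈ Finset.range N, c i
      = (∑ i ∈ Finset.range M₀, l (traj f x₀ uu i) (uu i))
        + ∑ i ∈ Finset.Ico M₀ N, l (z i) (v i) := by
    rw [Finset.range_eq_Ico, ← Finset.sum_Ico_consecutive _ (Nat.zero_le M₀) hMN,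
      ← Finset.range_eq_Ico]
    congr 1
    · refine Finset.sum_congr rfl fun i hi => ?_
      rw [hcdef i, if_pos (Finset.mem_range.mp hi)]
    · refine Finset.sum_congr rfl fun i hi => ?_
      obtain ⟨hi1, hi2⟩ := Finset.mem_Ico.mp hi
      rw [hcdef i, if_neg (Nat.not_lt.mpr hi1), if_pos hi2]
  have hsplitz : ∑ i ∈ Finset.range N, l (z i) (v i)
      = (∑ i ∈ Finset.range M₀, l (z i) (v i)) + ∑ i ∈ Finset.Ico M₀ N, l (z i) (v i) := by
    rw [Finset.range_eq_Ico, ← Finset.sum_Ico_consecutive _ (Nat.zero_le M₀) hMN,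
      ← Finset.range_eq_Ico]
  have hVx : mpcCost f l Vf N x₀ v = (∑ i ∈ Finset.range N, l (z i) (v i)) + Vf (z N) := by
    unfold mpcCost
    congr 1
    · exact Finset.sum_congr rfl fun i _ => by rw [← hz i]
    · rw [← hz N]
  have hTN : traj f x₁ v' N = f (z N) w := by
    rw [hT N le_rfl, if_neg (by omega : ¬ N < M₀), if_neg (lt_irrefl N)]
  have hcost' : mpcCost f l Vf N x₁ v' ≤ mpcCost f l Vf N x₀ v - (1 - a) * l x₀ (uu 0) := by
    rw [hVx]
    unfold mpcCost
    rw [hTN, hsum1]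
    have e1 : ∑ i ∈ Finset.range N, c (i+1)
        = (∑ i ∈ Finset.range N, c i) + c N - c 0 := by linarith
    rw [e1, hsplit, hc0, hcN, hsplitz]
    have h2 : Vf (f (z N) w) ≤ Vf (z N) - l (z N) w := hwV
    linarith
  calc VStar f X U Xf l Vf N x₁ ≤ mpcCost f l Vf N x₁ v' :=
        VStar_le_of_feasible f X U Xf l Vf hl hVf N x₁ v' hfeas'
    _ ≤ mpcCost f l Vf N x₀ v - (1 - a) * l x₀ (uu 0) := hcost'
    _ = VStar f X U Xf l Vf N x₀ - (1 - a) * l x₀ (uu 0) := by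
        rw [VStar_eq_of_opt f X U Xf l Vf hl hVf N x₀ v z hopt]

end Step

/-- Theorem 2 (time-varying mode scheduling): safety holds for all time, and once the
scheduling parameter satisfies `a(k) ≤ 1 − ā` for `k ≥ K_s`, the value function decreases
and the state converges to the origin. -/
theorem closed_loop_mode_scheduling {n m : ℕ}
    (f : EuclideanSpace ℝ (Fin n) → EuclideanSpace ℝ (Fin m) → EuclideanSpace ℝ (Fin n))
    (X : Set (EuclideanSpace ℝ (Fin n))) (U : Set (EuclideanSpace ℝ (Fin m)))
    (Xf : Set (EuclideanSpace ℝ (Fin n)))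
    (l : EuclideanSpace ℝ (Fin n) → EuclideanSpace ℝ (Fin m) → ℝ)
    (Vf : EuclideanSpace ℝ (Fin n) → ℝ)
    (N : ℕ) (a : ℕ → ℝ) (M : ℕ → ℕ) (α₁ : ℝ → ℝ)
    (hl : ∀ y w, 0 ≤ l y w)
    (hVf : ∀ y, 0 ≤ Vf y)
    (hXfX : Xf ⊆ X)
    (hterm : ∀ y ∈ Xf, ∃ w ∈ U, f y w ∈ Xf ∧ Vf (f y w) ≤ Vf y - l y w)
    (hα : IsKFun α₁)
    (hαl : ∀ y ∈ X, ∀ w ∈ U, α₁ ‖y‖ ≤ l y w)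
    (ha : ∀ k, 0 ≤ a k)
    (hM : ∀ k, 1 ≤ M k ∧ M k ≤ N)
    (x : ℕ → EuclideanSpace ℝ (Fin n))
    (u : ℕ → ℕ → EuclideanSpace ℝ (Fin m))
    (vs : ℕ → ℕ → EuclideanSpace ℝ (Fin m))
    (zs : ℕ → ℕ → EuclideanSpace ℝ (Fin n))
    (hloop : ∀ k, OptPair f X U Xf l Vf N (x k) (vs k) (zs k) ∧
      Adm f X U l (a k) (M k) (x k) (vs k) (zs k) (u k) ∧ x (k + 1) = f (x k) (u k 0)) :
    (∀ k, x k ∈ X ∧ u k 0 ∈ U) ∧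
    (∀ (Ks : ℕ) (abar : ℝ), 0 < abar → abar ≤ 1 → (∀ k, Ks ≤ k → a k ≤ 1 - abar) →
      (∀ k, Ks ≤ k → VStar f X U Xf l Vf N (x (k + 1))
          ≤ VStar f X U Xf l Vf N (x k) - abar * α₁ ‖x k‖) ∧
      Filter.Tendsto x Filter.atTop (nhds 0)) := by
  
  have hsafe : ∀ k, x k ∈ X ∧ u k 0 ∈ U := by
    intro k
    obtain ⟨-, hadm, -⟩ := hloop k
    have h0 : (0:ℕ) < M k := (hM k).1
    exact ⟨(hadm.1 0 h0).1, (hadm.1 0 h0).2⟩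
  refine ⟨hsafe, ?_⟩
  intro Ks abar habar0 habar1 hak
  have hα00 : α₁ 0 = 0 := hα.2.2
  have hα0 : ∀ t, 0 ≤ t → 0 ≤ α₁ t := by
    intro t ht
    have h := hα.2.1.monotoneOn Set.self_mem_Ici (Set.mem_Ici.mpr ht) ht
    rw [hα00] at h
    exact h
  set V : ℕ → ℝ := fun k => VStar f X U Xf l Vf N (x k) with hV
  have hdec : ∀ k, Ks ≤ k → V (k+1) ≤ V k - abar * α₁ ‖x k‖ := by
    intro k hk
    obtain ⟨hopt, hadm, hx1⟩ := hloop k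
    have hstep := step_lemma f X U Xf l Vf N hl hVf hXfX hterm (a k) (M k)
      (hM k).1 (hM k).2 (x k) (vs k) (zs k) (u k) hopt hadm
    rw [← hx1] at hstep
    have h1 : α₁ ‖x k‖ ≤ l (x k) (u k 0) := hαl (x k) (hsafe k).1 (u k 0) (hsafe k).2
    have h2 : abar ≤ 1 - a k := by have := hak k hk; linarith
    have h3 : 0 ≤ α₁ ‖x k‖ := hα0 _ (norm_nonneg _)
    have h4 : abar * α₁ ‖x k‖ ≤ (1 - a k) * l (x k) (u k 0) := by
      nlinarith [hl (x k) (u k 0)]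
    show VStar f X U Xf l Vf N (x (k+1)) ≤ VStar f X U Xf l Vf N (x k) - abar * α₁ ‖x k‖
    linarith
  refine ⟨hdec, ?_⟩
  have hVnn : ∀ k, 0 ≤ V k := fun k => VStar_nonneg f X U Xf l Vf hl hVf N (x k)
  set g : ℕ → ℝ := fun j => V (j + Ks) with hg
  have hstepg : ∀ j, g (j+1) ≤ g j - abar * α₁ ‖x (j + Ks)‖ := by
    intro j
    have h := hdec (j + Ks) (Nat.le_add_left Ks j)
    show V (j + 1 + Ks) ≤ V (j + Ks) - abar * α₁ ‖x (j + Ks)‖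
    rw [show j + 1 + Ks = j + Ks + 1 by omega]
    exact h
  have hanti : Antitone g := by
    apply antitone_nat_of_succ_le
    intro j
    have h := hstepg j
    have h3 : 0 ≤ abar * α₁ ‖x (j + Ks)‖ :=
      mul_nonneg habar0.le (hα0 _ (norm_nonneg _))
    linarith
  have hbdd : BddBelow (Set.range g) := by
    refine ⟨0, ?_⟩
    rintro b ⟨j, rfl⟩
    exact hVnn _
  have hLim : Filter.Tendsto g Filter.atTop (nhds (⨅ j, g j)) :=
    tendsto_atTop_ciInf hanti hbdd
  have hLim2 : Filter.Tendsto (fun j => g (j+1)) Filter.atTop (nhds (⨅ j, g j)) :=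
    hLim.comp (Filter.tendsto_add_atTop_nat 1)
  have hdiff : Filter.Tendsto (fun j => g j - g (j+1)) Filter.atTop (nhds 0) := by
    have h := hLim.sub hLim2
    simpa using h
  have hsq : Filter.Tendsto (fun j => abar * α₁ ‖x (j + Ks)‖) Filter.atTop (nhds 0) := by
    refine squeeze_zero (fun j => mul_nonneg habar0.le (hα0 _ (norm_nonneg _)))
      (fun j => ?_) hdiff
    have h := hstepg j
    linarith
  have hαt : Filter.Tendsto (fun j => α₁ ‖x (j + Ks)‖) Filter.atTop (nhds 0) := by
    have h := hsq.const_mul abar⁻¹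
    rw [mul_zero] at h
    refine h.congr fun j => ?_
    rw [← mul_assoc, inv_mul_cancel₀ (ne_of_gt habar0), one_mul]
  have hαfull : Filter.Tendsto (fun k => α₁ ‖x k‖) Filter.atTop (nhds 0) :=
    (Filter.tendsto_add_atTop_iff_nat Ks).mp hαt
  rw [NormedAddCommGroup.tendsto_nhds_zero]
  intro ε hε
  have hαε : 0 < α₁ ε := by
    have h := hα.2.1 Set.self_mem_Ici (Set.mem_Ici.mpr hε.le) hε
    rw [hα00] at h
    exact h
  have hev : ∀ᶠ k in Filter.atTop, α₁ ‖x k‖ < α₁ ε := hαfull.eventually_lt_const hαε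
  filter_upwards [hev] with k hk
  by_contra hcon
  push_neg at hcon
  have h := hα.2.1.monotoneOn (Set.mem_Ici.mpr hε.le) (Set.mem_Ici.mpr (norm_nonneg _)) hcon
  linarith
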